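/- Case rank ρ = m = n: if N^α_k(z,u) are nonlinear connection coefficients on E and δ/δzᵏ = ∂/∂zᵏ − N^α_k ∂/∂u^α, then the pushforward under ρ_* gives δ*/δzᵏ = ∂/∂zᵏ − *N^h_k ∂/∂ηʰ with *N^h_k(z,η) = ρʰ_α N^α_k(z,u) − (∂ρʰ_α/∂zᵏ) u^α, where ηᵏ = u^α ρᵏ_α. Conversely, given N^h_k on T'M, the functions *N^α_k(z,u) = ρ^α_h N^h_k(z,η) − (∂ρ^α_h/∂zᵏ) ηʰ satisfy N^h_k = ρʰ_α *N^α_k − (∂ρʰ_α/∂zᵏ) u^α. -/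

import Mathlib

open scoped BigOperators

noncomputable section

/-- `∂f/∂zᵏ` on the base. -/
def pd {n : ℕ} (k : Fin n) (f : (Fin n → ℂ) → ℂ) (z : Fin n → ℂ) : ℂ :=
  fderiv ℂ f z (Pi.single k 1)

/-- Case `rank ρ = m = n` (invertible anchor matrix).
(a) The pushforward of `δ/δzᵏ = ∂/∂zᵏ − N^α_k ∂/∂u^α` under `ρ_*` is
`∂/∂zᵏ − *N^h_k ∂/∂ηʰ` with `*N^h_k = ρʰ_α N^α_k − (∂ρʰ_α/∂zᵏ)u^α`.
(b) Conversely, `*N^α_k = ρ^α_h N^h_k − (∂ρ^α_h/∂zᵏ)ηʰ` satisfies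
`N^h_k = ρʰ_α *N^α_k − (∂ρʰ_α/∂zᵏ)u^α`. -/
theorem stmt_16 {n : ℕ}
    (ρ ρinv : Fin n → Fin n → (Fin n → ℂ) → ℂ)   -- ρ α h = ρʰ_α, ρinv h α = ρ^α_h
    (hρ : ∀ α k, ContDiff ℂ ⊤ (ρ α k)) (hρi : ∀ k α, ContDiff ℂ ⊤ (ρinv k α))
    (hinv1 : ∀ z α β, ∑ k, ρ α k z * ρinv k β z = if α = β then 1 else 0)
    (hinv2 : ∀ z k h, ∑ α, ρinv k α z * ρ α h z = if k = h then 1 else 0)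
    (N : Fin n → Fin n → ((Fin n → ℂ) × (Fin n → ℂ)) → ℂ)   -- N^α_k(z,u) on E
    (NT : Fin n → Fin n → ((Fin n → ℂ) × (Fin n → ℂ)) → ℂ)  -- N^h_k(z,η) on T'M
    :
    -- (a) the ∂/∂ηʰ-component of ρ_*(δ/δzᵏ) equals −*N^h_k:
    (∀ z (u : Fin n → ℂ) (k h : Fin n),
      (∑ α, u α * pd k (ρ α h) z) - (∑ α, N α k (z, u) * ρ α h z)
        = -((∑ α, ρ α h z * N α k (z, u)) - ∑ α, pd k (ρ α h) z * u α)) ∧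
    -- (b) the converse formula:
    (∀ z (u : Fin n → ℂ) (h k : Fin n),
      let η : Fin n → ℂ := fun j => ∑ α, u α * ρ α j z
      let Ns : Fin n → Fin n → ℂ := fun α k' =>
        (∑ j, ρinv j α z * NT j k' (z, η)) - ∑ j, pd k' (fun w => ρinv j α w) z * η j
      NT h k (z, η) = (∑ α, ρ α h z * Ns α k) - ∑ α, pd k (ρ α h) z * u α) := by
  constructor
  · intro z u k h
    rw [neg_sub]
    congr 1
    · exact Finset.sum_congr rfl fun α _ => mul_comm _ _
    · exact Finset.sum_congr rfl fun α _ => mul_comm _ _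
  · intro z u h k η Ns
    have hd1 : ∀ j α, DifferentiableAt ℂ (ρinv j α) z :=
      fun j α => (hρi j α).differentiable (by simp) z
    have hd2 : ∀ α j, DifferentiableAt ℂ (ρ α j) z :=
      fun α j => (hρ α j).differentiable (by simp) z
    -- key identity from differentiating hinv2
    have key : ∀ j, ∑ α, ρ α h z * pd k (fun w => ρinv j α w) z
        = -∑ α, ρinv j α z * pd k (ρ α h) z := by
      intro j
      have hF : (fun w => ∑ α, ρinv j α w * ρ α h w)
          = fun _ : Fin n → ℂ => (if j = h then (1:ℂ) else 0) :=
        funext fun w => hinv2 w j h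
      have h0 : fderiv ℂ (fun w => ∑ α, ρinv j α w * ρ α h w) z = 0 := by
        rw [hF]; exact fderiv_const_apply _
      have hsum : fderiv ℂ (fun w => ∑ α, ρinv j α w * ρ α h w) z (Pi.single k 1)
          = ∑ α, (fderiv ℂ (ρinv j α) z (Pi.single k 1) * ρ α h z
              + ρinv j α z * fderiv ℂ (ρ α h) z (Pi.single k 1)) := by
        rw [fderiv_fun_sum fun α _ => (show DifferentiableAt ℂ (fun w => ρinv j α w * ρ α h w) z from (hd1 j α).mul (hd2 α h))]
        rw [ContinuousLinearMap.sum_apply]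
        refine Finset.sum_congr rfl fun α _ => ?_
        rw [fderiv_fun_mul (hd1 j α) (hd2 α h)]
        simp only [ContinuousLinearMap.add_apply, ContinuousLinearMap.smul_apply, smul_eq_mul]
        ring
      have hz : ∑ α, (fderiv ℂ (ρinv j α) z (Pi.single k 1) * ρ α h z
          + ρinv j α z * fderiv ℂ (ρ α h) z (Pi.single k 1)) = 0 := by
        rw [← hsum, h0]; simp
      rw [Finset.sum_add_distrib] at hz
      have : ∑ α, ρ α h z * pd k (fun w => ρinv j α w) z
          = ∑ α, fderiv ℂ (ρinv j α) z (Pi.single k 1) * ρ α h z :=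
        Finset.sum_congr rfl fun α _ => mul_comm _ _
      rw [this]
      have : ∑ α, ρinv j α z * pd k (ρ α h) z
          = ∑ α, ρinv j α z * fderiv ℂ (ρ α h) z (Pi.single k 1) := rfl
      rw [this]
      linear_combination hz
    have hη : ∀ α, ∑ j, η j * ρinv j α z = u α := by
      intro α
      simp only [η, Finset.sum_mul]
      rw [Finset.sum_comm]
      calc ∑ β, ∑ j, u β * ρ β j z * ρinv j α z
          = ∑ β, u β * ∑ j, ρ β j z * ρinv j α z := by
            refine Finset.sum_congr rfl fun β _ => ?_
            rw [Finset.mul_sum]; exact Finset.sum_congr rfl fun j _ => (mul_assoc _ _ _)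
        _ = ∑ β, u β * if β = α then 1 else 0 := by
            refine Finset.sum_congr rfl fun β _ => by rw [hinv1]
        _ = u α := by simp
    have hT1 : ∑ α, ρ α h z * ∑ j, ρinv j α z * NT j k (z, η) = NT h k (z, η) := by
      simp_rw [Finset.mul_sum]
      rw [Finset.sum_comm]
      calc ∑ j, ∑ α, ρ α h z * (ρinv j α z * NT j k (z, η))
          = ∑ j, (∑ α, ρinv j α z * ρ α h z) * NT j k (z, η) := by
            refine Finset.sum_congr rfl fun j _ => ?_
            rw [Finset.sum_mul]; exact Finset.sum_congr rfl fun α _ => by ring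
        _ = ∑ j, (if j = h then (1:ℂ) else 0) * NT j k (z, η) := by
            refine Finset.sum_congr rfl fun j _ => by rw [hinv2]
        _ = NT h k (z, η) := by simp
    have hT2 : ∑ α, ρ α h z * ∑ j, pd k (fun w => ρinv j α w) z * η j
        = -∑ α, pd k (ρ α h) z * u α := by
      simp_rw [Finset.mul_sum]
      rw [Finset.sum_comm]
      calc ∑ j, ∑ α, ρ α h z * (pd k (fun w => ρinv j α w) z * η j)
          = ∑ j, η j * ∑ α, ρ α h z * pd k (fun w => ρinv j α w) z := by
            refine Finset.sum_congr rfl fun j _ => ?_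
            rw [Finset.mul_sum]; exact Finset.sum_congr rfl fun α _ => by ring
        _ = ∑ j, η j * -∑ α, ρinv j α z * pd k (ρ α h) z := by
            refine Finset.sum_congr rfl fun j _ => by rw [key]
        _ = -∑ j, ∑ α, η j * ρinv j α z * pd k (ρ α h) z := by
            rw [← Finset.sum_neg_distrib]
            refine Finset.sum_congr rfl fun j _ => ?_
            simp only [mul_neg, Finset.mul_sum, neg_inj, mul_assoc]
        _ = -∑ α, ∑ j, η j * ρinv j α z * pd k (ρ α h) z := by rw [Finset.sum_comm]
        _ = -∑ α, pd k (ρ α h) z * u α := by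
            congr 1
            refine Finset.sum_congr rfl fun α _ => ?_
            rw [← Finset.sum_mul, hη]; ring
    simp only [Ns, mul_sub, Finset.sum_sub_distrib, hT1, hT2]
    ring

end
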